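/- The set of copulas M(m) equals the intersection of the nonnegative orthant of R^(S×S) with the translated Birkhoff polytope μ₀ − I + conv(Φ); that is, a matrix μ ∈ R^(S×S) is a probability distribution on S×S with both marginals equal to m if and only if μ has nonnegative entries and μ = μ₀ − I + J for some J in the convex hull of the S×S permutation matrices. -/

import Mathlib

/-- `f` is a probability distribution on `S × S` whose two marginals both equal `m`. -/
def IsCopula {S : Type*} [Fintype S] (m : S → ℝ) (μ : S × S → ℝ) : Prop :=
  (∀ q, 0 ≤ μ q) ∧ (∑ q : S × S, μ q = 1) ∧
    (∀ s, ∑ a, μ (s, a) = m s) ∧ (∀ a, ∑ s, μ (s, a) = m a)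

/-- The diagonal copula `μ₀`. -/
def mu0 {S : Type*} [DecidableEq S] (m : S → ℝ) : S × S → ℝ :=
  fun q => if q.1 = q.2 then m q.1 else 0

/-- The set `Φ` of `S × S` permutation matrices. -/
def permMatrices (S : Type*) [DecidableEq S] : Set (S × S → ℝ) :=
  {P | ∃ φ : Equiv.Perm S, ∀ q : S × S, P q = if q.2 = φ q.1 then 1 else 0}

/-- The linear equivalence between functions on `S × S` and matrices. -/
noncomputable def curryLE (S : Type*) : (S × S → ℝ) ≃ₗ[ℝ] Matrix S S ℝ where
  toFun J := Matrix.of fun s t => J (s, t)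
  map_add' _ _ := rfl
  map_smul' _ _ := rfl
  invFun M q := M q.1 q.2
  left_inv _ := rfl
  right_inv _ := rfl

lemma curryLE_apply (S : Type*) (J : S × S → ℝ) (s t : S) : curryLE S J s t = J (s, t) := rfl

lemma curryLE_image_permMatrices (S : Type*) [Fintype S] [DecidableEq S] :
    curryLE S '' permMatrices S = {M | ∃ σ : Equiv.Perm S, σ.permMatrix ℝ = M} := by
  ext M
  constructor
  · rintro ⟨P, ⟨σ, hσ⟩, rfl⟩
    refine ⟨σ, ?_⟩
    ext i j
    simp [Equiv.Perm.permMatrix, PEquiv.toMatrix_apply, Equiv.toPEquiv_apply, curryLE_apply,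
      hσ (i, j), eq_comm]
  · rintro ⟨σ, rfl⟩
    refine ⟨fun q => if q.2 = σ q.1 then 1 else 0, ⟨σ, fun _ => rfl⟩, ?_⟩
    ext i j
    simp [Equiv.Perm.permMatrix, PEquiv.toMatrix_apply, Equiv.toPEquiv_apply, curryLE_apply, eq_comm]

lemma mem_convexHull_permMatrices_iff {S : Type*} [Fintype S] [DecidableEq S]
    (J : S × S → ℝ) :
    J ∈ convexHull ℝ (permMatrices S) ↔
      (Matrix.of fun s t => J (s, t)) ∈ doublyStochastic ℝ S := by
  have h1 : (curryLE S) '' (convexHull ℝ (permMatrices S))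
      = convexHull ℝ ((curryLE S) '' permMatrices S) :=
    (curryLE S).toLinearMap.image_convexHull _
  have h2 : J ∈ convexHull ℝ (permMatrices S) ↔
      curryLE S J ∈ (curryLE S) '' (convexHull ℝ (permMatrices S)) :=
    ((curryLE S).injective.mem_set_image).symm
  rw [h2, h1, curryLE_image_permMatrices, ← doublyStochastic_eq_convexHull_permMatrix]
  rfl

theorem stmt0 {S : Type*} [Fintype S] [DecidableEq S] [Nonempty S]
    (m : S → ℝ) (hm : ∀ s, 0 ≤ m s) (hm1 : ∑ s, m s = 1)
    (μ : S × S → ℝ) :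
    IsCopula m μ ↔
      ((∀ q, 0 ≤ μ q) ∧
        ∃ J ∈ convexHull ℝ (permMatrices S),
          μ = mu0 m - (fun q : S × S => if q.1 = q.2 then (1 : ℝ) else 0) + J) := by
  have hmle : ∀ s, m s ≤ 1 := by
    intro s
    rw [← hm1]
    exact Finset.single_le_sum (fun i _ => hm i) (Finset.mem_univ s)
  constructor
  · rintro ⟨hpos, _hsum, hrow, hcol⟩
    refine ⟨hpos, fun q => μ q - mu0 m q + (if q.1 = q.2 then (1 : ℝ) else 0), ?_, ?_⟩
    · rw [mem_convexHull_permMatrices_iff, mem_doublyStochastic_iff_sum]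
      refine ⟨fun i j => ?_, fun i => ?_, fun j => ?_⟩
      · by_cases h : i = j
        · subst h
          simp only [Matrix.of_apply, mu0, if_pos rfl, if_true]
          have := hpos (i, i)
          have := hmle i
          linarith
        · simp only [Matrix.of_apply, mu0, if_neg h]
          simpa using hpos (i, j)
      · simp only [Matrix.of_apply, mu0]
        rw [Finset.sum_add_distrib, Finset.sum_sub_distrib]
        simp [hrow i, Finset.sum_ite_eq]
      · simp only [Matrix.of_apply, mu0]
        rw [Finset.sum_add_distrib, Finset.sum_sub_distrib]
        have h1 : ∀ i : S, (if i = j then m i else 0) = (if i = j then m j else 0) := by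
          intro i; split <;> simp_all
        rw [Finset.sum_congr rfl fun i _ => h1 i]
        simp [hcol j, Finset.sum_ite_eq']
    · funext q
      simp only [Pi.add_apply, Pi.sub_apply]
      ring
  · rintro ⟨hpos, J, hJ, hμ⟩
    rw [mem_convexHull_permMatrices_iff, mem_doublyStochastic_iff_sum] at hJ
    obtain ⟨hJpos, hJrow, hJcol⟩ := hJ
    simp only [Matrix.of_apply] at hJrow hJcol
    have hμq : ∀ q : S × S, μ q = mu0 m q - (if q.1 = q.2 then (1 : ℝ) else 0) + J q := by
      intro q; rw [hμ]; rfl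
    have hrow : ∀ s, ∑ a, μ (s, a) = m s := by
      intro s
      simp only [hμq, mu0]
      rw [Finset.sum_add_distrib, Finset.sum_sub_distrib]
      simp [hJrow s, Finset.sum_ite_eq]
    have hcol : ∀ a, ∑ s, μ (s, a) = m a := by
      intro a
      simp only [hμq, mu0]
      rw [Finset.sum_add_distrib, Finset.sum_sub_distrib]
      have h1 : ∀ s : S, (if s = a then m s else 0) = (if s = a then m a else 0) := by
        intro s; split <;> simp_all
      rw [Finset.sum_congr rfl fun s _ => h1 s]
      simp [hJcol a, Finset.sum_ite_eq']
    refine ⟨hpos, ?_, hrow, hcol⟩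
    rw [Fintype.sum_prod_type]
    simp [hrow, hm1]
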